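/- For the closure set Cl(Φ,[0,1)) of a BoundedMITL[F_b,P_b] formula Φ in normal form, the cardinality of Cl(Φ,[0,1)) is at most exponential in the modal-DAG size of Φ: |Cl(Φ,[0,1))| = O(2^l) where l is the modal-DAG size of Φ (with constants encoded in binary), because each modality F_I or P_I with interval I of integer length m contributes m+1 interval-shifted requirements per incoming requirement, and m ≤ 2^{|binary encoding of m|}. -/

import Mathlib

namespace Stmt19

/-- Syntax of BoundedMITL[F_b,P_b] over alphabet `A`: unary MITL where each modality
carries a bounded interval ⟨l,u⟩ with natural-number endpoints `l < u < ∞`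
(the openness of the endpoints is irrelevant to the closure construction). -/
inductive BF (A : Type) : Type
  | atom : A → BF A
  | or : BF A → BF A → BF A
  | not : BF A → BF A
  | fut : ℕ → ℕ → BF A → BF A
  | past : ℕ → ℕ → BF A → BF A

/-- Conjunction, as a derived boolean connective. -/
def BF.and {A : Type} (p q : BF A) : BF A := .not (.or (.not p) (.not q))

mutual
  /-- Normal form: a disjunction of normal-form disjuncts. -/
  inductive NF {A : Type} : BF A → Prop
    | base {φ : BF A} : NFD φ → NF φ
    | or {φ ψ : BF A} : NF φ → NF ψ → NF (.or φ ψ)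
  /-- A normal-form disjunct: `a ∧ B({ψ_i})`. -/
  inductive NFD {A : Type} : BF A → Prop
    | mk {a : A} {ψ : BF A} : BC ψ → NFD (BF.and (.atom a) ψ)
  /-- Boolean combinations of modal formulas. -/
  inductive BC {A : Type} : BF A → Prop
    | modal {ψ : BF A} : NFM ψ → BC ψ
    | or {φ ψ : BF A} : BC φ → BC ψ → BC (.or φ ψ)
    | not {φ : BF A} : BC φ → BC (.not φ)
  /-- Modal formulas: F or P with a bounded non-singular interval ⟨l,u⟩, l < u,
  and a normal-form argument. -/
  inductive NFM {A : Type} : BF A → Prop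
    | fut {l u : ℕ} {φ : BF A} : l < u → NF φ → NFM (.fut l u φ)
    | past {l u : ℕ} {φ : BF A} : l < u → NF φ → NFM (.past l u φ)
end

/-- Closure contributions of the modal subformulas of a formula, relative to the unit
interval [r,r+1): `F_{⟨l,u⟩} δ` generates requirements `(δ, [r+j, r+j+1))` for
l ≤ j ≤ u, and `P_{⟨l,u⟩} δ` generates `(δ, [r−j, r−j+1))` for l ≤ j ≤ u
(a unit interval [r,r+1) is represented by its left endpoint r). -/
def ClM {A : Type} : BF A → ℤ → Set (BF A × ℤ)
  | .atom _, _ => ∅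
  | .or p q, r => ClM p r ∪ ClM q r
  | .not p, r => ClM p r
  | .fut l u d, r => ⋃ j ∈ Finset.Icc l u, insert (d, r + (j : ℤ)) (ClM d (r + (j : ℤ)))
  | .past l u d, r => ⋃ j ∈ Finset.Icc l u, insert (d, r - (j : ℤ)) (ClM d (r - (j : ℤ)))

/-- The closure set Cl(φ,[r,r+1)). -/
def Cl {A : Type} (φ : BF A) (r : ℤ) : Set (BF A × ℤ) := insert (φ, r) (ClM φ r)

/-- The set of modal subformulas of a formula (shared subformulas counted once,
as in a DAG representation). -/
def modalSubs {A : Type} : BF A → Set (BF A)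
  | .atom _ => ∅
  | .or p q => modalSubs p ∪ modalSubs q
  | .not p => modalSubs p
  | .fut l u p => insert (.fut l u p) (modalSubs p)
  | .past l u p => insert (.past l u p) (modalSubs p)

/-- Length of the binary encodings of the top-level interval constants of a modal
formula. -/
def topConstLen {A : Type} : BF A → ℕ
  | .fut l u _ => Nat.log2 (l + 1) + Nat.log2 (u + 1) + 2
  | .past l u _ => Nat.log2 (l + 1) + Nat.log2 (u + 1) + 2
  | _ => 0

/-- The modal-DAG size of a formula: number of modal nodes in the DAG plus the sum of
the binary-encoding lengths of the interval constants. -/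
noncomputable def msize {A : Type} (φ : BF A) : ℕ :=
  (modalSubs φ).ncard + ∑ᶠ ψ ∈ modalSubs φ, topConstLen ψ

/-! ### Auxiliary material for the proof -/

attribute [local instance] Classical.propDecidable

lemma modalSubs_finite {A : Type} (φ : BF A) : (modalSubs φ).Finite := by
  induction φ with
  | atom a => simp [modalSubs]
  | or p q hp hq => exact hp.union hq
  | not p hp => exact hp
  | fut l u p hp => exact hp.insert _
  | past l u p hp => exact hp.insert _

lemma sizeOf_le_of_mem {A : Type} {ψ φ : BF A} (h : ψ ∈ modalSubs φ) :
    sizeOf ψ ≤ sizeOf φ := by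
  induction φ with
  | atom a => simp [modalSubs] at h
  | or p q hp hq =>
    rcases h with h | h
    · exact le_trans (hp h) (by simp only [BF.or.sizeOf_spec]; omega)
    · exact le_trans (hq h) (by simp only [BF.or.sizeOf_spec]; omega)
  | not p hp => exact le_trans (hp h) (by simp only [BF.not.sizeOf_spec]; omega)
  | fut l u p hp =>
    rcases h with h | h
    · simp [h]
    · exact le_trans (hp h) (by simp only [BF.fut.sizeOf_spec]; omega)
  | past l u p hp =>
    rcases h with h | h
    · simp [h]
    · exact le_trans (hp h) (by simp only [BF.past.sizeOf_spec]; omega)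

lemma fut_not_mem {A : Type} (l u : ℕ) (d : BF A) : BF.fut l u d ∉ modalSubs d := by
  intro h
  have := sizeOf_le_of_mem h
  simp only [BF.fut.sizeOf_spec] at this
  omega

lemma past_not_mem {A : Type} (l u : ℕ) (d : BF A) : BF.past l u d ∉ modalSubs d := by
  intro h
  have := sizeOf_le_of_mem h
  simp only [BF.past.sizeOf_spec] at this
  omega

/-- The modal subformulas as a `Finset`. -/
noncomputable def msubs {A : Type} (φ : BF A) : Finset (BF A) :=
  (modalSubs_finite φ).toFinset

lemma mem_msubs {A : Type} {ψ φ : BF A} : ψ ∈ msubs φ ↔ ψ ∈ modalSubs φ :=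
  Set.Finite.mem_toFinset _

lemma coe_msubs {A : Type} (φ : BF A) : (msubs φ : Set (BF A)) = modalSubs φ :=
  Set.Finite.coe_toFinset _

lemma msubs_or {A : Type} (p q : BF A) : msubs (.or p q) = msubs p ∪ msubs q := by
  ext x; simp [mem_msubs, modalSubs]

lemma msubs_fut {A : Type} (l u : ℕ) (d : BF A) :
    msubs (.fut l u d) = insert (BF.fut l u d) (msubs d) := by
  ext x; simp [mem_msubs, modalSubs]

lemma msubs_past {A : Type} (l u : ℕ) (d : BF A) :
    msubs (.past l u d) = insert (BF.past l u d) (msubs d) := by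
  ext x; simp [mem_msubs, modalSubs]

/-- The integer length of the interval of a modal formula. -/
def ub {A : Type} : BF A → ℕ
  | .fut _ u _ => u
  | .past _ u _ => u
  | _ => 0

/-- The argument of a modal formula. -/
def argOf {A : Type} : BF A → BF A
  | .fut _ _ d => d
  | .past _ _ d => d
  | φ => φ

/-- The total weight of a formula: sum of interval lengths over all modal
subformulas (in the DAG). -/
noncomputable def W {A : Type} (φ : BF A) : ℕ := ∑ ψ ∈ msubs φ, ub ψ

lemma W_fut {A : Type} (l u : ℕ) (d : BF A) : W (.fut l u d) = u + W d := by
  rw [W, msubs_fut, Finset.sum_insert (by simp [mem_msubs, fut_not_mem])]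
  rfl

lemma W_past {A : Type} (l u : ℕ) (d : BF A) : W (.past l u d) = u + W d := by
  rw [W, msubs_past, Finset.sum_insert (by simp [mem_msubs, past_not_mem])]
  rfl

lemma W_le_or_left {A : Type} (p q : BF A) : W p ≤ W (.or p q) := by
  rw [W, W, msubs_or]
  exact Finset.sum_le_sum_of_subset Finset.subset_union_left

lemma W_le_or_right {A : Type} (p q : BF A) : W q ≤ W (.or p q) := by
  rw [W, W, msubs_or]
  exact Finset.sum_le_sum_of_subset Finset.subset_union_right

/-- Every element of `ClM φ r` is the argument of some modal subformula of `φ`,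
shifted by at most the total weight `W φ`. -/
lemma clM_mem {A : Type} (φ : BF A) (r : ℤ) (x : BF A × ℤ) (hx : x ∈ ClM φ r) :
    ∃ ψ ∈ modalSubs φ, x.1 = argOf ψ ∧ r - W φ ≤ x.2 ∧ x.2 ≤ r + W φ := by
  induction φ generalizing r with
  | atom a => simp [ClM] at hx
  | or p q hp hq =>
    rcases hx with hx | hx
    · obtain ⟨ψ, h1, h2, h3, h4⟩ := hp r hx
      refine ⟨ψ, Or.inl h1, h2, ?_, ?_⟩ <;>
        have := W_le_or_left p q <;> omega
    · obtain ⟨ψ, h1, h2, h3, h4⟩ := hq r hx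
      refine ⟨ψ, Or.inr h1, h2, ?_, ?_⟩ <;>
        have := W_le_or_right p q <;> omega
  | not p hp => exact hp r hx
  | fut l u d hd =>
    simp only [ClM, Set.mem_iUnion, Finset.mem_Icc, exists_prop] at hx
    obtain ⟨j, ⟨hjl, hju⟩, hx⟩ := hx
    have hW := W_fut l u d
    rcases hx with hx | hx
    · refine ⟨BF.fut l u d, Or.inl rfl, by simp [hx, argOf], ?_, ?_⟩ <;>
        · subst hx; simp only []; push_cast [hW]; omega
    · obtain ⟨ψ, h1, h2, h3, h4⟩ := hd (r + j) hx
      refine ⟨ψ, Or.inr h1, h2, ?_, ?_⟩ <;> · push_cast [hW] at *; omega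
  | past l u d hd =>
    simp only [ClM, Set.mem_iUnion, Finset.mem_Icc, exists_prop] at hx
    obtain ⟨j, ⟨hjl, hju⟩, hx⟩ := hx
    have hW := W_past l u d
    rcases hx with hx | hx
    · refine ⟨BF.past l u d, Or.inl rfl, by simp [hx, argOf], ?_, ?_⟩ <;>
        · subst hx; simp only []; push_cast [hW]; omega
    · obtain ⟨ψ, h1, h2, h3, h4⟩ := hd (r - j) hx
      refine ⟨ψ, Or.inr h1, h2, ?_, ?_⟩ <;> · push_cast [hW] at *; omega

/-- Every modal subformula is a `fut` or `past`. -/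
lemma mem_modalSubs_shape {A : Type} {ψ φ : BF A} (h : ψ ∈ modalSubs φ) :
    (∃ l u d, ψ = BF.fut l u d) ∨ (∃ l u d, ψ = BF.past l u d) := by
  induction φ with
  | atom a => simp [modalSubs] at h
  | or p q hp hq => rcases h with h | h
                    · exact hp h
                    · exact hq h
  | not p hp => exact hp h
  | fut l u p hp => rcases h with h | h
                    · exact Or.inl ⟨l, u, p, h⟩
                    · exact hp h
  | past l u p hp => rcases h with h | h
                     · exact Or.inr ⟨l, u, p, h⟩
                     · exact hp h

lemma ub_le_pow {A : Type} {ψ φ : BF A} (h : ψ ∈ modalSubs φ) :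
    ub ψ ≤ 2 ^ topConstLen ψ ∧ 2 ≤ topConstLen ψ := by
  have key : ∀ u k : ℕ, Nat.log2 (u + 1) + 1 ≤ k → u ≤ 2 ^ k := by
    intro u k hk
    have h1 := (Nat.log2_lt (by omega : u + 1 ≠ 0)).mp
      (Nat.lt_succ_self (Nat.log2 (u + 1)))
    have h2 : (2:ℕ) ^ (Nat.log2 (u + 1) + 1) ≤ 2 ^ k :=
      Nat.pow_le_pow_right (by norm_num) hk
    omega
  rcases mem_modalSubs_shape h with ⟨l, u, d, rfl⟩ | ⟨l, u, d, rfl⟩ <;>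
    exact ⟨key u _ (by simp [topConstLen]; omega), by simp [topConstLen]⟩

lemma sum_pow_le {β : Type} (F : Finset β) (g : β → ℕ) (hg : ∀ b ∈ F, 2 ≤ g b) :
    ∑ b ∈ F, 2 ^ g b ≤ 2 ^ (∑ b ∈ F, g b) := by
  induction F using Finset.induction_on with
  | empty => simp
  | @insert a F ha ih =>
    rw [Finset.sum_insert ha, Finset.sum_insert ha]
    rcases F.eq_empty_or_nonempty with h | ⟨b, hb⟩
    · subst h; simp
    · have hgF : ∀ c ∈ F, 2 ≤ g c := fun c hc => hg c (Finset.mem_insert_of_mem hc)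
      have hS : 2 ≤ ∑ c ∈ F, g c :=
        le_trans (hgF b hb) (Finset.single_le_sum (fun _ _ => Nat.zero_le _) hb)
      have hga : 2 ≤ g a := hg a (Finset.mem_insert_self _ _)
      have ihF := ih hgF
      have h2a : 4 ≤ 2 ^ g a := by
        calc (4:ℕ) = 2^2 := rfl
        _ ≤ 2 ^ g a := Nat.pow_le_pow_right (by norm_num) hga
      have h2S : 4 ≤ 2 ^ (∑ c ∈ F, g c) := by
        calc (4:ℕ) = 2^2 := rfl
        _ ≤ _ := Nat.pow_le_pow_right (by norm_num) hS
      have hmul : (2:ℕ) ^ (g a + ∑ c ∈ F, g c) = 2 ^ g a * 2 ^ (∑ c ∈ F, g c) :=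
        pow_add 2 _ _
      have m1 : 4 * 2 ^ (∑ c ∈ F, g c) ≤ 2 ^ g a * 2 ^ (∑ c ∈ F, g c) :=
        Nat.mul_le_mul_right _ h2a
      have m2 : 2 ^ g a * 4 ≤ 2 ^ g a * 2 ^ (∑ c ∈ F, g c) :=
        Nat.mul_le_mul_left _ h2S
      linarith

lemma W_le_pow {A : Type} (φ : BF A) :
    W φ ≤ 2 ^ (∑ ψ ∈ msubs φ, topConstLen ψ) := by
  calc W φ = ∑ ψ ∈ msubs φ, ub ψ := rfl
  _ ≤ ∑ ψ ∈ msubs φ, 2 ^ topConstLen ψ :=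
      Finset.sum_le_sum fun ψ hψ => (ub_le_pow (mem_msubs.mp hψ)).1
  _ ≤ 2 ^ (∑ ψ ∈ msubs φ, topConstLen ψ) :=
      sum_pow_le _ _ fun ψ hψ => (ub_le_pow (mem_msubs.mp hψ)).2

lemma msize_eq {A : Type} (φ : BF A) :
    msize φ = (msubs φ).card + ∑ ψ ∈ msubs φ, topConstLen ψ := by
  rw [msize, ← coe_msubs φ, finsum_mem_coe_finset, Set.ncard_coe_finset]

/-- for a BoundedMITL[F_b,P_b] formula Φ in normal form, the cardinality
of the closure set Cl(Φ,[0,1)) is at most exponential in the modal-DAG size of Φ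
(constants in binary): |Cl(Φ,[0,1))| = O(2^l) for l = msize Φ. -/
theorem closure_card_exponential {A : Type} :
    ∃ C : ℕ, 0 < C ∧ ∀ φ : BF A, NF φ →
      (Cl φ 0).ncard ≤ C * 2 ^ (C * msize φ) := by
  refine ⟨4, by norm_num, fun φ _ => ?_⟩
  set N : ℕ := (msubs φ).card with hN
  set S : ℕ := ∑ ψ ∈ msubs φ, topConstLen ψ with hS
  -- the enclosing finite superset
  set Tf : Finset (BF A × ℤ) :=
    insert (φ, (0:ℤ))
      ((msubs φ).image argOf ×ˢ Finset.Icc (-(W φ : ℤ)) (W φ)) with hTf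
  have hsub : Cl φ 0 ⊆ ↑Tf := by
    rintro x hx
    rcases hx with hx | hx
    · simp [hTf, hx]
    · obtain ⟨ψ, h1, h2, h3, h4⟩ := clM_mem φ 0 x hx
      have : x ∈ (msubs φ).image argOf ×ˢ Finset.Icc (-(W φ : ℤ)) (W φ) := by
        rw [Finset.mem_product]
        constructor
        · exact Finset.mem_image.mpr ⟨ψ, mem_msubs.mpr h1, h2.symm⟩
        · rw [Finset.mem_Icc]; omega
      exact Finset.mem_coe.mpr (Finset.mem_insert_of_mem this)
  have hcard : (Cl φ 0).ncard ≤ Tf.card := by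
    have := Set.ncard_le_ncard hsub Tf.finite_toSet
    rwa [Set.ncard_coe_finset] at this
  have hTcard : Tf.card ≤ 1 + N * (2 * W φ + 1) := by
    calc Tf.card ≤ ((msubs φ).image argOf ×ˢ Finset.Icc (-(W φ : ℤ)) (W φ)).card + 1 :=
          Finset.card_insert_le _ _
    _ ≤ N * (2 * W φ + 1) + 1 := by
        rw [Finset.card_product]
        have h1 : ((msubs φ).image argOf).card ≤ N := Finset.card_image_le
        have h2 : (Finset.Icc (-(W φ : ℤ)) (W φ)).card = 2 * W φ + 1 := by
          rw [Int.card_Icc]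
          omega
        rw [h2]
        exact Nat.add_le_add_right (Nat.mul_le_mul_right _ h1) 1
    _ = 1 + N * (2 * W φ + 1) := by omega
  have hW : W φ ≤ 2 ^ S := W_le_pow φ
  have hNle : N ≤ 2 ^ N := Nat.le_of_lt (Nat.lt_two_pow_self (n := N))
  have harith : 1 + N * (2 * W φ + 1) ≤ 4 * 2 ^ (4 * (N + S)) := by
    have h3 : 1 ≤ (2:ℕ)^S := Nat.one_le_two_pow
    have h4 : 1 ≤ (2:ℕ)^N := Nat.one_le_two_pow
    have h5 : (2:ℕ)^(N+S) = 2^N * 2^S := pow_add 2 _ _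
    have h6 : 1 + N * (2 * W φ + 1) ≤ 4 * 2 ^ (N + S) := by
      have : N * (2 * W φ + 1) ≤ 2^N * (3 * 2^S) :=
        Nat.mul_le_mul hNle (by omega)
      nlinarith
    calc 1 + N * (2 * W φ + 1) ≤ 4 * 2 ^ (N + S) := h6
    _ ≤ 4 * 2 ^ (4 * (N + S)) :=
        Nat.mul_le_mul_left _ (Nat.pow_le_pow_right (by norm_num) (by omega))
  rw [msize_eq, ← hN, ← hS]
  omega

end Stmt19
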